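/- Let u ≤ w in Bruhat order on Sₙ, let 1 ≤ j < k ≤ n, and suppose t_{u(j),u(k)}·u ≤ w. Then there exists a sequence u(j) = c₀, c₁, …, c_p = u(k) with p ≥ 1 such that (c_{ℓ−1}, c_ℓ) ∈ Ẽ_w(u) for every 1 ≤ ℓ ≤ p. In particular, the vector e_{u(k)} − e_{u(j)} lies in the convex cone in ℝⁿ generated by {e_y − e_x : (x,y) ∈ Ẽ_w(u)}. -/

import Mathlib

namespace SchubertToric

open Equiv

/-- The number of inversions (= the length `ℓ`) of a permutation. -/
def invCount {n : ℕ} (w : Equiv.Perm (Fin n)) : ℕ :=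
  ((Finset.univ : Finset (Fin n × Fin n)).filter fun p => p.1 < p.2 ∧ w p.2 < w p.1).card

/-- `initSeg w d` is the set `{w(1), …, w(d)}` (0-indexed: images of the first `d` indices). -/
def initSeg {n : ℕ} (w : Equiv.Perm (Fin n)) (d : ℕ) : Finset (Fin n) :=
  (Finset.univ.filter fun i : Fin n => (i : ℕ) < d).image w

/-- `domLE S T`: the increasing rearrangement of `S` is componentwise ≤ that of `T`. -/
def domLE {n : ℕ} (S T : Finset (Fin n)) : Prop :=
  List.Forall₂ (· ≤ ·) (S.sort (· ≤ ·)) (T.sort (· ≤ ·))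

/-- Bruhat order on `
Sₙ`, via the tableau criterion. -/
def bruhatLE {n : ℕ} (v w : Equiv.Perm (Fin n)) : Prop :=
  ∀ d : ℕ, domLE (initSeg v d) (initSeg w d)

/-- `GreedyRel w v vp` says that `vp = v'`, the result of the greedy operation associated
to `w`: there is a sequence of indices `idx 0, idx 1, …`, each chosen as the *least* index
not previously chosen such that the increasing rearrangement of the previously chosen values
together with the new value is componentwise at most `{w(1),…,w(d)}`, and `vp d = v (idx d)`. -/
def GreedyRel {n : ℕ} (w v vp : Equiv.Perm (Fin n)) : Prop :=
  ∃ idx : Fin n → Fin n,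
    (∀ d : Fin n, vp d = v (idx d)) ∧
    ∀ d : Fin n,
      IsLeast {i : Fin n |
        (∀ e : Fin n, e < d → idx e ≠ i) ∧
        domLE (insert (v i)
            ((Finset.univ.filter fun e : Fin n => e < d).image fun e => v (idx e)))
          (initSeg w ((d : ℕ) + 1))}
        (idx d)

/-- Right weak order: `rightWeakLE u v` iff `v = u·s_{i₁}⋯s_{i_k}` with
`ℓ(u·s_{i₁}⋯s_{i_j}) = ℓ(u) + j` for all `0 ≤ j ≤ k`. -/
def rightWeakLE {n : ℕ} (u v : Equiv.Perm (Fin n)) : Prop :=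
  ∃ L : List (Equiv.Perm (Fin n)),
    (∀ s ∈ L, ∃ (i : Fin n) (h : (i : ℕ) + 1 < n), s = Equiv.swap i ⟨(i : ℕ) + 1, h⟩) ∧
    v = u * L.prod ∧
    ∀ k ≤ L.length, invCount (u * (L.take k).prod) = invCount u + k

/-- `Ref(w) = {(w(i),w(j)) : i < j, ℓ(w) − ℓ(t_{w(i),w(j)}·w) = 1}`. -/
def RefSet {n : ℕ} (w : Equiv.Perm (Fin n)) : Set (Fin n × Fin n) :=
  {p | ∃ i j : Fin n, i < j ∧ p = (w i, w j) ∧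
    invCount (Equiv.swap (w i) (w j) * w) + 1 = invCount w}

/-- The (undirected) graph `Γ_w` on `Fin n` whose edges are the pairs in `Ref(w)`. -/
def refGraph {n : ℕ} (w : Equiv.Perm (Fin n)) : SimpleGraph (Fin n) :=
  SimpleGraph.fromRel fun a b => (a, b) ∈ RefSet w

/-- The vertices of `Γ_w`: the integers occurring in pairs of `Ref(w)`. -/
def refVerts {n : ℕ} (w : Equiv.Perm (Fin n)) : Set (Fin n) :=
  {a | ∃ b, (a, b) ∈ RefSet w ∨ (b, a) ∈ RefSet w}

/-- The cone `C(v) = {x ∈ ℝⁿ : x_{v(1)} ≤ x_{v(2)} ≤ ⋯ ≤ x_{v(n)}}`. -/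
def coneC {n : ℕ} (v : Equiv.Perm (Fin n)) : Set (Fin n → ℝ) :=
  {x | ∀ i j : Fin n, i ≤ j → x (v i) ≤ x (v j)}

/-- `Ẽ_w(u) = {(u(i),u(j)) : i < j, t_{u(i),u(j)}·u ≤ w, |ℓ(u) − ℓ(t_{u(i),u(j)}·u)| = 1}`. -/
def Etil {n : ℕ} (w u : Equiv.Perm (Fin n)) : Set (Fin n × Fin n) :=
  {p | ∃ i j : Fin n, i < j ∧ p = (u i, u j) ∧
    bruhatLE (Equiv.swap (u i) (u j) * u) w ∧
    (invCount (Equiv.swap (u i) (u j) * u) + 1 = invCount u ∨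
      invCount u + 1 = invCount (Equiv.swap (u i) (u j) * u))}

/-- An element `p = (a,b)` of `Ẽ_w(u)` is decomposable if it is a sum (under
`(a,b)+(b,c) = (a,c)`) of two or more other elements of `Ẽ_w(u)`. -/
def Decomposable {n : ℕ} (w u : Equiv.Perm (Fin n)) (p : Fin n × Fin n) : Prop :=
  ∃ (m : ℕ) (c : ℕ → Fin n), 2 ≤ m ∧ c 0 = p.1 ∧ c m = p.2 ∧
    ∀ i < m, (c i, c (i + 1)) ∈ Etil w u ∧ (c i, c (i + 1)) ≠ p

/-- `E_w(u)`: the indecomposable elements of `Ẽ_w(u)`. -/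
def Ew {n : ℕ} (w u : Equiv.Perm (Fin n)) : Set (Fin n × Fin n) :=
  {p | p ∈ Etil w u ∧ ¬ Decomposable w u p}

/-- The longest element `w₀ = n(n−1)⋯21` of `Sₙ`. -/
def w0 {n : ℕ} : Equiv.Perm (Fin n) :=
  Function.Involutive.toPerm Fin.rev Fin.rev_rev

/-! ### Auxiliary lemmas for the proof of STATEMENT 16 -/

section ChainAux
variable {n : ℕ}

lemma forall2_refl (l : List (Fin n)) : List.Forall₂ (· ≤ ·) l l :=
  List.forall₂_same.2 fun _ _ => le_refl _

lemma forall2_trans {a b c : List (Fin n)} (h1 : List.Forall₂ (· ≤ ·) a b)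
    (h2 : List.Forall₂ (· ≤ ·) b c) : List.Forall₂ (· ≤ ·) a c := by
  induction h1 generalizing c with
  | nil => exact h2
  | cons h t ih =>
    cases h2 with
    | cons h' t' => exact List.Forall₂.cons (le_trans h h') (ih t')

lemma domLE_refl (S : Finset (Fin n)) : domLE S S := forall2_refl _

lemma domLE_trans {S T U : Finset (Fin n)} (h1 : domLE S T) (h2 : domLE T U) : domLE S U :=
  forall2_trans h1 h2

lemma bruhatLE_trans {u v w : Perm (Fin n)} (h1 : bruhatLE u v) (h2 : bruhatLE v w) :
    bruhatLE u w := fun d => domLE_trans (h1 d) (h2 d)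

lemma sort_insert_eq (a : Fin n) (T : Finset (Fin n)) (ha : a ∉ T) :
    (insert a T).sort (· ≤ ·) = (T.sort (· ≤ ·)).orderedInsert (· ≤ ·) a := by
  refine List.Perm.eq_of_pairwise' (Finset.pairwise_sort _ _)
    (List.Pairwise.orderedInsert _ _ (Finset.pairwise_sort _ _)) ?_
  have h1 : ((insert a T).sort (· ≤ ·) : Multiset (Fin n)) = ↑(a :: T.sort (· ≤ ·)) := by
    rw [Finset.sort_eq, Finset.insert_val_of_notMem ha, ← Multiset.cons_coe, Finset.sort_eq]
  refine (Multiset.coe_eq_coe.1 h1).trans ?_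
  exact (List.perm_orderedInsert _ _ _).symm

lemma forall2_orderedInsert_cons {x b : Fin n} {xs : List (Fin n)}
    (hs : List.Pairwise (· ≤ ·) (x :: xs)) (hxb : x ≤ b) :
    List.Forall₂ (· ≤ ·) (x :: xs) (xs.orderedInsert (· ≤ ·) b) := by
  induction xs generalizing x with
  | nil => simpa using hxb
  | cons y ys ih =>
    obtain ⟨hx, hys⟩ := List.pairwise_cons.1 hs
    rw [List.orderedInsert]
    split_ifs with h
    · exact List.Forall₂.cons hxb (forall2_refl _)
    · exact List.Forall₂.cons (hx y (by simp)) (ih hys (le_of_not_ge h))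

lemma forall2_orderedInsert {a b : Fin n} (hab : a ≤ b) (l : List (Fin n))
    (hl : List.Pairwise (· ≤ ·) l) :
    List.Forall₂ (· ≤ ·) (l.orderedInsert (· ≤ ·) a) (l.orderedInsert (· ≤ ·) b) := by
  induction l with
  | nil => simpa using hab
  | cons x xs ih =>
    obtain ⟨hx, hxs⟩ := List.pairwise_cons.1 hl
    rw [List.orderedInsert, List.orderedInsert]
    by_cases h1 : a ≤ x
    · by_cases h2 : b ≤ x
      · rw [if_pos h1, if_pos h2]
        exact List.Forall₂.cons hab (forall2_refl _)
      · rw [if_pos h1, if_neg h2]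
        exact List.Forall₂.cons h1 (forall2_orderedInsert_cons hl (le_of_not_ge h2))
    · have h2 : ¬ b ≤ x := fun h => h1 (le_trans hab h)
      rw [if_neg h1, if_neg h2]
      exact List.Forall₂.cons (le_refl x) (ih hxs)

lemma domLE_insert {a b : Fin n} {T : Finset (Fin n)} (hab : a ≤ b) (ha : a ∉ T) (hb : b ∉ T) :
    domLE (insert a T) (insert b T) := by
  unfold domLE
  rw [sort_insert_eq a T ha, sort_insert_eq b T hb]
  exact forall2_orderedInsert hab _ (Finset.pairwise_sort _ _)

lemma mem_image_swap {j m x : Fin n} {s : Finset (Fin n)} :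
    x ∈ s.image (swap j m) ↔ swap j m x ∈ s := by
  constructor
  · rintro h
    obtain ⟨i, hi, rfl⟩ := Finset.mem_image.1 h
    rwa [swap_apply_self]
  · intro h
    exact Finset.mem_image.2 ⟨_, h, swap_apply_self _ _ _⟩

lemma initSeg_eq (u σ : Perm (Fin n)) (d : ℕ) :
    initSeg (u * σ) d =
      ((Finset.univ.filter fun i : Fin n => (i : ℕ) < d).image σ).image u := by
  rw [Finset.image_image]
  rfl

lemma image_swap_lo {j m : Fin n} (hjm : j < m) {d : ℕ} (hd : d ≤ (j : ℕ)) :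
    (Finset.univ.filter fun i : Fin n => (i : ℕ) < d).image (swap j m) =
      Finset.univ.filter fun i : Fin n => (i : ℕ) < d := by
  ext x
  have hv := Fin.lt_iff_val_lt_val.1 hjm
  rw [mem_image_swap, Finset.mem_filter, Finset.mem_filter]
  simp only [Finset.mem_univ, true_and]
  rcases eq_or_ne x j with rfl | h1
  · rw [swap_apply_left]; omega
  rcases eq_or_ne x m with rfl | h2
  · rw [swap_apply_right]; omega
  · rw [swap_apply_of_ne_of_ne h1 h2]

lemma image_swap_mid {j m : Fin n} (hjm : j < m) {d : ℕ} (hd1 : (j : ℕ) < d)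
    (hd2 : d ≤ (m : ℕ)) :
    (Finset.univ.filter fun i : Fin n => (i : ℕ) < d).image (swap j m) =
      insert m ((Finset.univ.filter fun i : Fin n => (i : ℕ) < d).erase j) := by
  ext x
  have hv := Fin.lt_iff_val_lt_val.1 hjm
  rw [mem_image_swap, Finset.mem_insert, Finset.mem_erase, Finset.mem_filter, Finset.mem_filter]
  simp only [Finset.mem_univ, true_and]
  rcases eq_or_ne x j with rfl | h1
  · rw [swap_apply_left]
    simp only [ne_eq, Fin.ext_iff, not_true, false_and, or_false]
    omega
  have h1' : (x : ℕ) ≠ (j : ℕ) := fun h => h1 (Fin.ext h)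
  rcases eq_or_ne x m with rfl | h2
  · rw [swap_apply_right]
    exact iff_of_true hd1 (Or.inl rfl)
  · have h2' : (x : ℕ) ≠ (m : ℕ) := fun h => h2 (Fin.ext h)
    rw [swap_apply_of_ne_of_ne h1 h2]
    simp only [ne_eq, Fin.ext_iff]
    omega

lemma image_swap_hi {j m : Fin n} (hjm : j < m) {d : ℕ} (hd : (m : ℕ) < d) :
    (Finset.univ.filter fun i : Fin n => (i : ℕ) < d).image (swap j m) =
      Finset.univ.filter fun i : Fin n => (i : ℕ) < d := by
  ext x
  have hv := Fin.lt_iff_val_lt_val.1 hjm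
  rw [mem_image_swap, Finset.mem_filter, Finset.mem_filter]
  simp only [Finset.mem_univ, true_and]
  rcases eq_or_ne x j with rfl | h1
  · rw [swap_apply_left]; omega
  rcases eq_or_ne x m with rfl | h2
  · rw [swap_apply_right]; omega
  · rw [swap_apply_of_ne_of_ne h1 h2]

lemma initSeg_mul_swap_lo (u : Perm (Fin n)) {j m : Fin n} (hjm : j < m) {d : ℕ}
    (hd : d ≤ (j : ℕ)) : initSeg (u * swap j m) d = initSeg u d := by
  rw [initSeg_eq, image_swap_lo hjm hd]; rfl

lemma initSeg_mul_swap_mid (u : Perm (Fin n)) {j m : Fin n} (hjm : j < m) {d : ℕ}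
    (hd1 : (j : ℕ) < d) (hd2 : d ≤ (m : ℕ)) :
    initSeg (u * swap j m) d = insert (u m) ((initSeg u d).erase (u j)) := by
  rw [initSeg_eq, image_swap_mid hjm hd1 hd2, Finset.image_insert,
    Finset.image_erase u.injective]
  rfl

lemma initSeg_mul_swap_hi (u : Perm (Fin n)) {j m : Fin n} (hjm : j < m) {d : ℕ}
    (hd : (m : ℕ) < d) : initSeg (u * swap j m) d = initSeg u d := by
  rw [initSeg_eq, image_swap_hi hjm hd]; rfl

lemma apply_mem_initSeg {u : Perm (Fin n)} {i : Fin n} {d : ℕ} :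
    u i ∈ initSeg u d ↔ (i : ℕ) < d := by
  simp [initSeg, u.injective.eq_iff]

/-- If `j < m` and `u j < u m` then `u ≤ u·t_{jm}` in Bruhat order. -/
lemma bruhatLE_mul_swap (u : Perm (Fin n)) {j m : Fin n} (hjm : j < m) (hv : u j < u m) :
    bruhatLE u (u * swap j m) := by
  intro d
  rcases le_or_gt d (j : ℕ) with hd | hd1
  · rw [initSeg_mul_swap_lo u hjm hd]; exact domLE_refl _
  rcases le_or_gt d (m : ℕ) with hd2 | hd2
  · rw [initSeg_mul_swap_mid u hjm hd1 hd2]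
    have haS : u j ∈ initSeg u d := apply_mem_initSeg.2 hd1
    have hbS : u m ∉ initSeg u d := fun h => by
      have := apply_mem_initSeg.1 h; omega
    nth_rewrite 1 [← Finset.insert_erase haS]
    exact domLE_insert (le_of_lt hv) (Finset.notMem_erase _ _)
      (fun h => hbS (Finset.mem_of_mem_erase h))
  · rw [initSeg_mul_swap_hi u hjm hd2]; exact domLE_refl _

lemma bruhat_swap_swap_left (u : Perm (Fin n)) {j m k : Fin n} (hjm : j < m) (hmk : m < k)
    (h1 : u j < u m) (h2 : u m < u k) :
    bruhatLE (u * swap j m) (u * swap j k) := by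
  have hjk : j < k := lt_trans hjm hmk
  have hmkv := Fin.lt_iff_val_lt_val.1 hmk
  intro d
  rcases le_or_gt d (j : ℕ) with hd | hdj
  · rw [initSeg_mul_swap_lo u hjm hd, initSeg_mul_swap_lo u hjk hd]; exact domLE_refl _
  rcases le_or_gt d (m : ℕ) with hdm | hdm
  · rw [initSeg_mul_swap_mid u hjm hdj hdm,
      initSeg_mul_swap_mid u hjk hdj (by omega)]
    refine domLE_insert (le_of_lt h2) ?_ ?_
    · intro h
      have := apply_mem_initSeg.1 (Finset.mem_of_mem_erase h); omega
    · intro h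
      have := apply_mem_initSeg.1 (Finset.mem_of_mem_erase h); omega
  rcases le_or_gt d (k : ℕ) with hdk | hdk
  · rw [initSeg_mul_swap_hi u hjm hdm, initSeg_mul_swap_mid u hjk hdj hdk]
    have haS : u j ∈ initSeg u d := apply_mem_initSeg.2 hdj
    nth_rewrite 1 [← Finset.insert_erase haS]
    refine domLE_insert (le_of_lt (lt_trans h1 h2)) (Finset.notMem_erase _ _) ?_
    intro h
    have := apply_mem_initSeg.1 (Finset.mem_of_mem_erase h); omega
  · rw [initSeg_mul_swap_hi u hjm hdm, initSeg_mul_swap_hi u hjk hdk]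
    exact domLE_refl _

lemma bruhat_swap_swap_right (u : Perm (Fin n)) {j m k : Fin n} (hjm : j < m) (hmk : m < k)
    (h1 : u j < u m) (h2 : u m < u k) :
    bruhatLE (u * swap m k) (u * swap j k) := by
  have hjk : j < k := lt_trans hjm hmk
  have hjmv := Fin.lt_iff_val_lt_val.1 hjm
  intro d
  rcases le_or_gt d (j : ℕ) with hd | hdj
  · rw [initSeg_mul_swap_lo u hmk (by omega), initSeg_mul_swap_lo u hjk hd]
    exact domLE_refl _
  rcases le_or_gt d (m : ℕ) with hdm | hdm
  · rw [initSeg_mul_swap_lo u hmk hdm, initSeg_mul_swap_mid u hjk hdj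
      (le_trans hdm (le_of_lt (Fin.lt_iff_val_lt_val.1 hmk)))]
    have haS : u j ∈ initSeg u d := apply_mem_initSeg.2 hdj
    nth_rewrite 1 [← Finset.insert_erase haS]
    refine domLE_insert (le_of_lt (lt_trans h1 h2)) (Finset.notMem_erase _ _) ?_
    intro h
    have := apply_mem_initSeg.1 (Finset.mem_of_mem_erase h)
    have := Fin.lt_iff_val_lt_val.1 hmk; omega
  rcases le_or_gt d (k : ℕ) with hdk | hdk
  · rw [initSeg_mul_swap_mid u hmk hdm hdk, initSeg_mul_swap_mid u hjk hdj hdk]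
    have hjS : u j ∈ (initSeg u d).erase (u m) :=
      Finset.mem_erase.2 ⟨h1.ne, apply_mem_initSeg.2 hdj⟩
    have hmS : u m ∈ (initSeg u d).erase (u j) :=
      Finset.mem_erase.2 ⟨h1.ne', apply_mem_initSeg.2 hdm⟩
    have hkS : u k ∉ initSeg u d := fun h => by
      have := apply_mem_initSeg.1 h; omega
    rw [← Finset.insert_erase hjS, ← Finset.insert_erase hmS,
      Finset.erase_right_comm (a := u m) (b := u j)]
    rw [Finset.insert_comm (u k) (u j), Finset.insert_comm (u k) (u m)]
    refine domLE_insert (le_of_lt h1) ?_ ?_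
    · intro hmem
      rcases Finset.mem_insert.1 hmem with he | he
      · exact (lt_trans h1 h2).ne he
      · exact Finset.notMem_erase _ _ (Finset.mem_of_mem_erase he)
    · intro hmem
      rcases Finset.mem_insert.1 hmem with he | he
      · exact h2.ne he
      · exact Finset.notMem_erase _ _ he
  · rw [initSeg_mul_swap_hi u hmk hdk, initSeg_mul_swap_hi u hjk hdk]
    exact domLE_refl _

lemma swap_fix_lo {j k x : Fin n} (hjk : j < k) (hx : x < j) : swap j k x = x :=
  swap_apply_of_ne_of_ne (ne_of_lt hx) (ne_of_lt (lt_trans hx hjk))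

lemma swap_fix_hi {j k x : Fin n} (hjk : j < k) (hx : k < x) : swap j k x = x :=
  swap_apply_of_ne_of_ne (ne_of_gt (lt_trans hjk hx)) (ne_of_gt hx)

lemma swap_pair_sorted {j k p1 p2 : Fin n} (hjk : j < k) (h12 : p1 < p2)
    (h : p1 < j ∨ k < p2) : swap j k p1 < swap j k p2 := by
  rcases h with h | h
  · rw [swap_fix_lo hjk h]
    rcases eq_or_ne p2 j with rfl | h2j
    · rw [swap_apply_left]; exact lt_trans h hjk
    rcases eq_or_ne p2 k with rfl | h2k
    · rw [swap_apply_right]; exact h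
    · rw [swap_apply_of_ne_of_ne h2j h2k]; exact h12
  · rw [swap_fix_hi hjk h]
    rcases eq_or_ne p1 j with rfl | h1j
    · rw [swap_apply_left]; exact h
    rcases eq_or_ne p1 k with rfl | h1k
    · rw [swap_apply_right]; exact lt_trans hjk h
    · rw [swap_apply_of_ne_of_ne h1j h1k]; exact h12

/-- If `u j < u k` and no value strictly between them occurs strictly between positions
`j` and `k`, the swap increases the inversion number by exactly `1`. -/
lemma invCount_mul_swap_succ (u : Perm (Fin n)) {j k : Fin n} (hjk : j < k)
    (hv : u j < u k)
    (hmid : ∀ m : Fin n, j < m → m < k → ¬(u j < u m ∧ u m < u k)) :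
    invCount (u * swap j k) = invCount u + 1 := by
  classical
  have hinj := u.injective
  have hvj : (u * swap j k) j = u k := by rw [Perm.mul_apply, swap_apply_left]
  have hvk : (u * swap j k) k = u j := by rw [Perm.mul_apply, swap_apply_right]
  have hvo : ∀ x, x ≠ j → x ≠ k → (u * swap j k) x = u x := fun x h1 h2 => by
    rw [Perm.mul_apply, swap_apply_of_ne_of_ne h1 h2]
  have hthen : ∀ p1 p2 : Fin n, j ≤ p1 → p2 ≤ k → p1 < p2 → (p1, p2) ≠ (j, k) →
      ((u * swap j k) p2 < (u * swap j k) p1 ↔ u p2 < u p1) := by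
    intro p1 p2 h1 h2 h12 hne
    rcases eq_or_lt_of_le h1 with rfl | h1'
    · have hp2k : p2 ≠ k := fun h => hne (by rw [h])
      have h2' : p2 < k := lt_of_le_of_ne h2 hp2k
      rw [hvj, hvo p2 (ne_of_gt h12) hp2k]
      have hm := hmid p2 h12 h2'
      constructor
      · intro hlt
        have hh : ¬ u j < u p2 := fun hh => hm ⟨hh, hlt⟩
        exact lt_of_le_of_ne (le_of_not_gt hh) (hinj.ne (ne_of_gt h12))
      · intro hlt; exact lt_trans hlt hv
    · rcases eq_or_lt_of_le h2 with rfl | h2'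
      · rw [hvk, hvo p1 (ne_of_gt h1') (ne_of_lt h12)]
        have hm := hmid p1 h1' h12
        constructor
        · intro hlt
          have hh : ¬ u p1 < u p2 := fun hh => hm ⟨hlt, hh⟩
          exact lt_of_le_of_ne (le_of_not_gt hh) ((hinj.ne (ne_of_lt h12)).symm)
        · intro hlt; exact lt_trans hv hlt
      · rw [hvo p1 (ne_of_gt h1') (ne_of_lt (lt_trans h12 h2')),
          hvo p2 (ne_of_gt (lt_trans h1' h12)) (ne_of_lt h2')]
  set A := (Finset.univ : Finset (Fin n × Fin n)).filter
    (fun p => p.1 < p.2 ∧ (u * swap j k) p.2 < (u * swap j k) p.1) with hA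
  set B := (Finset.univ : Finset (Fin n × Fin n)).filter
    (fun p => p.1 < p.2 ∧ u p.2 < u p.1) with hB
  have hjkA : (j, k) ∈ A := by
    rw [hA, Finset.mem_filter]
    exact ⟨Finset.mem_univ _, hjk, by rw [hvj, hvk]; exact hv⟩
  have horof : ∀ p : Fin n × Fin n, ¬(j ≤ p.1 ∧ p.2 ≤ k) → p.1 < j ∨ k < p.2 := by
    intro p h
    by_cases h1 : j ≤ p.1
    · exact Or.inr (lt_of_not_ge fun h2 => h ⟨h1, h2⟩)
    · exact Or.inl (lt_of_not_ge h1)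
  have key : (A.erase (j, k)).card = B.card := by
    apply Finset.card_nbij'
      (i := fun p => if j ≤ p.1 ∧ p.2 ≤ k then p else (swap j k p.1, swap j k p.2))
      (j := fun p => if j ≤ p.1 ∧ p.2 ≤ k then p else (swap j k p.1, swap j k p.2))
    · intro p hp
      dsimp only
      obtain ⟨hpne, hpA⟩ := Finset.mem_erase.1 hp
      obtain ⟨-, h12, hinv⟩ := Finset.mem_filter.1 hpA
      by_cases h : j ≤ p.1 ∧ p.2 ≤ k
      · rw [if_pos h, hB]
        refine Finset.mem_filter.2 ⟨Finset.mem_univ _, h12, ?_⟩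
        exact (hthen p.1 p.2 h.1 h.2 h12 (by rwa [Prod.mk.eta])).1 hinv
      · rw [if_neg h, hB]
        refine Finset.mem_filter.2
          ⟨Finset.mem_univ _, swap_pair_sorted hjk h12 (horof p h), ?_⟩
        show u (swap j k p.2) < u (swap j k p.1)
        have e1 : u (swap j k p.1) = (u * swap j k) p.1 := rfl
        have e2 : u (swap j k p.2) = (u * swap j k) p.2 := rfl
        rw [e1, e2]; exact hinv
    · intro p hp
      dsimp only
      obtain ⟨-, h12, hinv⟩ := Finset.mem_filter.1 hp
      by_cases h : j ≤ p.1 ∧ p.2 ≤ k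
      · rw [if_pos h]
        have hpne : p ≠ (j, k) := by
          intro he
          subst he
          exact absurd hinv (not_lt.2 (le_of_lt hv))
        refine Finset.mem_erase.2 ⟨hpne, ?_⟩
        rw [hA]
        refine Finset.mem_filter.2 ⟨Finset.mem_univ _, h12, ?_⟩
        exact (hthen p.1 p.2 h.1 h.2 h12 (by rwa [Prod.mk.eta])).2 hinv
      · rw [if_neg h]
        have hor := horof p h
        refine Finset.mem_erase.2 ⟨?_, ?_⟩
        · rcases hor with h' | h'
          · intro he
            have he1 : swap j k p.1 = j := congrArg Prod.fst he
            rw [swap_fix_lo hjk h'] at he1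
            exact absurd he1 (ne_of_lt h')
          · intro he
            have he2 : swap j k p.2 = k := congrArg Prod.snd he
            rw [swap_fix_hi hjk h'] at he2
            exact absurd he2 (ne_of_gt h')
        · rw [hA]
          refine Finset.mem_filter.2
            ⟨Finset.mem_univ _, swap_pair_sorted hjk h12 hor, ?_⟩
          show (u * swap j k) (swap j k p.2) < (u * swap j k) (swap j k p.1)
          rw [Perm.mul_apply, Perm.mul_apply, swap_apply_self, swap_apply_self]
          exact hinv
    · intro p _
      dsimp only
      by_cases h : j ≤ p.1 ∧ p.2 ≤ k
      · rw [if_pos h, if_pos h]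
      · rw [if_neg h]
        have hor := horof p h
        have h2 : ¬ (j ≤ (swap j k p.1, swap j k p.2).1 ∧ (swap j k p.1, swap j k p.2).2 ≤ k) := by
          rcases hor with h' | h'
          · rw [show (swap j k p.1, swap j k p.2).1 = swap j k p.1 from rfl, swap_fix_lo hjk h']
            exact fun hh => absurd hh.1 (not_le.2 h')
          · rw [show (swap j k p.1, swap j k p.2).2 = swap j k p.2 from rfl, swap_fix_hi hjk h']
            exact fun hh => absurd hh.2 (not_le.2 h')
        rw [if_neg h2]
        ext <;> simp [swap_apply_self]
    · intro p _
      dsimp only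
      by_cases h : j ≤ p.1 ∧ p.2 ≤ k
      · rw [if_pos h, if_pos h]
      · rw [if_neg h]
        have hor := horof p h
        have h2 : ¬ (j ≤ (swap j k p.1, swap j k p.2).1 ∧ (swap j k p.1, swap j k p.2).2 ≤ k) := by
          rcases hor with h' | h'
          · rw [show (swap j k p.1, swap j k p.2).1 = swap j k p.1 from rfl, swap_fix_lo hjk h']
            exact fun hh => absurd hh.1 (not_le.2 h')
          · rw [show (swap j k p.1, swap j k p.2).2 = swap j k p.2 from rfl, swap_fix_hi hjk h']
            exact fun hh => absurd hh.2 (not_le.2 h')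
        rw [if_neg h2]
        ext <;> simp [swap_apply_self]
  have hApos : 1 ≤ A.card := Finset.card_pos.2 ⟨_, hjkA⟩
  have hAe := Finset.card_erase_of_mem hjkA
  have e1 : invCount (u * swap j k) = A.card := by rw [hA]; rfl
  have e2 : invCount u = B.card := by rw [hB]; rfl
  omega

lemma invCount_mul_swap_pred (u : Perm (Fin n)) {j k : Fin n} (hjk : j < k)
    (hv : u k < u j)
    (hmid : ∀ m : Fin n, j < m → m < k → ¬(u k < u m ∧ u m < u j)) :
    invCount (u * swap j k) + 1 = invCount u := by
  have h := invCount_mul_swap_succ (u * swap j k) hjk ?_ ?_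
  · rw [mul_assoc, swap_mul_self, mul_one] at h
    omega
  · show (u * swap j k) j < (u * swap j k) k
    rw [Perm.mul_apply, Perm.mul_apply, swap_apply_left, swap_apply_right]; exact hv
  · intro m h1 h2 hc
    rw [Perm.mul_apply, Perm.mul_apply, Perm.mul_apply, swap_apply_left, swap_apply_right,
      swap_apply_of_ne_of_ne (ne_of_gt h1) (ne_of_lt h2)] at hc
    exact hmid m h1 h2 hc

/-- Gluing two `Etil`-chains. -/
lemma chain_concat {w u : Perm (Fin n)} {x y z : Fin n}
    (h1 : ∃ (p : ℕ) (c : ℕ → Fin n), 1 ≤ p ∧ c 0 = x ∧ c p = y ∧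
      ∀ l < p, (c l, c (l + 1)) ∈ Etil w u)
    (h2 : ∃ (p : ℕ) (c : ℕ → Fin n), 1 ≤ p ∧ c 0 = y ∧ c p = z ∧
      ∀ l < p, (c l, c (l + 1)) ∈ Etil w u) :
    ∃ (p : ℕ) (c : ℕ → Fin n), 1 ≤ p ∧ c 0 = x ∧ c p = z ∧
      ∀ l < p, (c l, c (l + 1)) ∈ Etil w u := by
  obtain ⟨p1, c1, hp1, h10, h1p, h1e⟩ := h1
  obtain ⟨p2, c2, hp2, h20, h2p, h2e⟩ := h2
  refine ⟨p1 + p2, fun l => if l < p1 then c1 l else c2 (l - p1), by omega, ?_, ?_, ?_⟩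
  · simp only [if_pos (by omega : 0 < p1)]; exact h10
  · simp only [if_neg (by omega : ¬ p1 + p2 < p1)]
    rw [show p1 + p2 - p1 = p2 by omega]; exact h2p
  · intro l hl
    by_cases hl1 : l < p1
    · by_cases hlt : l + 1 < p1
      · simp only [if_pos hl1, if_pos hlt]
        exact h1e l hl1
      · have heq : l + 1 = p1 := by omega
        simp only [if_pos hl1, if_neg hlt]
        rw [show l + 1 - p1 = 0 by omega, h20, ← h1p, show p1 = l + 1 by omega]
        exact h1e l hl1
    · simp only [if_neg hl1, if_neg (by omega : ¬ l + 1 < p1)]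
      rw [show l + 1 - p1 = (l - p1) + 1 by omega]
      exact h2e (l - p1) (by omega)

/-- Main recursion: a chain in `Ẽ_w(u)` from `u j` to `u k`. -/
lemma chain_exists (w u : Perm (Fin n)) (huw : bruhatLE u w) :
    ∀ N : ℕ, ∀ j k : Fin n, (k : ℕ) ≤ (j : ℕ) + N → j < k →
      bruhatLE (Equiv.swap (u j) (u k) * u) w →
      ∃ (p : ℕ) (c : ℕ → Fin n), 1 ≤ p ∧ c 0 = u j ∧ c p = u k ∧
        ∀ l < p, (c l, c (l + 1)) ∈ Etil w u := by
  intro N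
  induction N with
  | zero =>
    intro j k hN hjk _
    exact absurd (Fin.lt_iff_val_lt_val.1 hjk) (by omega)
  | succ N ih =>
    intro j k hN hjk ht
    have hjkv := Fin.lt_iff_val_lt_val.1 hjk
    have huvne : u j ≠ u k := u.injective.ne (ne_of_lt hjk)
    by_cases hmid : ∃ m : Fin n, j < m ∧ m < k ∧
        ((u j < u m ∧ u m < u k) ∨ (u k < u m ∧ u m < u j))
    · obtain ⟨m, hjm, hmk, hcase⟩ := hmid
      have hjmv := Fin.lt_iff_val_lt_val.1 hjm
      have hmkv := Fin.lt_iff_val_lt_val.1 hmk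
      rcases hcase with ⟨h1, h2⟩ | ⟨h1, h2⟩
      · -- increasing case
        have ht' : bruhatLE (u * swap j k) w := by
          rwa [Equiv.mul_swap_eq_swap_mul]
        have htjm : bruhatLE (Equiv.swap (u j) (u m) * u) w := by
          rw [← Equiv.mul_swap_eq_swap_mul]
          exact bruhatLE_trans (bruhat_swap_swap_left u hjm hmk h1 h2) ht'
        have htmk : bruhatLE (Equiv.swap (u m) (u k) * u) w := by
          rw [← Equiv.mul_swap_eq_swap_mul]
          exact bruhatLE_trans (bruhat_swap_swap_right u hjm hmk h1 h2) ht'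
        exact chain_concat (ih j m (by omega) hjm htjm) (ih m k (by omega) hmk htmk)
      · -- decreasing case
        have htjm : bruhatLE (Equiv.swap (u j) (u m) * u) w := by
          rw [← Equiv.mul_swap_eq_swap_mul]
          have hvv : (u * swap j m) j < (u * swap j m) m := by
            rw [Perm.mul_apply, Perm.mul_apply, swap_apply_left, swap_apply_right]
            exact h2
          have hb := bruhatLE_mul_swap (u * swap j m) hjm hvv
          rw [mul_assoc, swap_mul_self, mul_one] at hb
          exact bruhatLE_trans hb huw
        have htmk : bruhatLE (Equiv.swap (u m) (u k) * u) w := by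
          rw [← Equiv.mul_swap_eq_swap_mul]
          have hvv : (u * swap m k) m < (u * swap m k) k := by
            rw [Perm.mul_apply, Perm.mul_apply, swap_apply_left, swap_apply_right]
            exact h1
          have hb := bruhatLE_mul_swap (u * swap m k) hmk hvv
          rw [mul_assoc, swap_mul_self, mul_one] at hb
          exact bruhatLE_trans hb huw
        exact chain_concat (ih j m (by omega) hjm htjm) (ih m k (by omega) hmk htmk)
    · -- base case: no intermediate value
      have hlen : invCount (Equiv.swap (u j) (u k) * u) + 1 = invCount u ∨
          invCount u + 1 = invCount (Equiv.swap (u j) (u k) * u) := by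
        rw [← Equiv.mul_swap_eq_swap_mul]
        rcases lt_or_gt_of_ne huvne with hvv | hvv
        · right
          refine (invCount_mul_swap_succ u hjk hvv ?_).symm
          intro m hm1 hm2 hc
          exact hmid ⟨m, hm1, hm2, Or.inl hc⟩
        · left
          refine invCount_mul_swap_pred u hjk hvv ?_
          intro m hm1 hm2 hc
          exact hmid ⟨m, hm1, hm2, Or.inr hc⟩
      refine ⟨1, fun l => if l = 0 then u j else u k, le_refl 1, by simp, by simp, ?_⟩
      intro l hl
      have hl0 : l = 0 := by omega
      subst hl0
      simp only [if_pos rfl, if_neg (Nat.one_ne_zero)]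
      exact ⟨j, k, hjk, rfl, ht, hlen⟩

end ChainAux


/-- If `u ≤ w`, `j < k`, and `t_{u(j),u(k)}·u ≤ w`, then there is a chain
`u(j) = c₀, c₁, …, c_p = u(k)` (`p ≥ 1`) with all consecutive pairs in `Ẽ_w(u)`;
in particular `e_{u(k)} − e_{u(j)}` lies in the convex cone generated by
`{e_y − e_x : (x,y) ∈ Ẽ_w(u)}`. -/
theorem chain_in_Etil {n : ℕ} (w u : Equiv.Perm (Fin n)) (huw : bruhatLE u w)
    (j k : Fin n) (hjk : j < k)
    (ht : bruhatLE (Equiv.swap (u j) (u k) * u) w) :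
    (∃ (p : ℕ) (c : ℕ → Fin n), 1 ≤ p ∧ c 0 = u j ∧ c p = u k ∧
        ∀ l < p, (c l, c (l + 1)) ∈ Etil w u) ∧
    (∃ (m : ℕ) (coef : Fin m → ℝ) (q : Fin m → Fin n × Fin n),
        (∀ i, 0 ≤ coef i) ∧ (∀ i, q i ∈ Etil w u) ∧
        (Pi.single (u k) 1 - Pi.single (u j) 1 : Fin n → ℝ) =
          ∑ i, coef i • (Pi.single (q i).2 1 - Pi.single (q i).1 1 : Fin n → ℝ)) := by
  obtain ⟨p, c, hp, h0, hpk, he⟩ := chain_exists w u huw (k : ℕ) j k (by omega) hjk ht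
  refine ⟨⟨p, c, hp, h0, hpk, he⟩, p, fun _ => 1, fun i => (c i, c (i + 1)),
    fun _ => zero_le_one, fun i => he i i.isLt, ?_⟩
  simp only [one_smul]
  calc (Pi.single (u k) 1 - Pi.single (u j) 1 : Fin n → ℝ)
      = Pi.single (c p) 1 - Pi.single (c 0) 1 := by rw [h0, hpk]
    _ = ∑ l ∈ Finset.range p, (Pi.single (c (l + 1)) 1 - Pi.single (c l) 1 : Fin n → ℝ) :=
        (Finset.sum_range_sub (fun l => (Pi.single (c l) 1 : Fin n → ℝ)) p).symm
    _ = ∑ x : Fin p, (Pi.single (c (↑x + 1)) 1 - Pi.single (c ↑x) 1 : Fin n → ℝ) :=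
        (Fin.sum_univ_eq_sum_range
          (fun l => (Pi.single (c (l + 1)) 1 - Pi.single (c l) 1 : Fin n → ℝ)) p).symm
end SchubertToric
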